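/- Let η_t (t ≥ 1) be a family of real-valued random variables, a a nonzero real number, σ > 0, b ∈ (0, 1/4], and C > 0 such that sup_{s∈ℝ} |P(√t (η_t − a) ≤ s) − Φ_σ(s)| ≤ C t^{−b} for all t ≥ 1, where Φ_σ is the distribution function of the centred normal law with variance σ². Then for any c > 0 there is a constant L > 0 depending only on a, σ, C, c such that sup_{s∈ℝ} |P(c√t (η_t^{−1} − a^{−1}) ≤ s) − Φ_{ĉσ}(s)| ≤ L t^{−b} for all t ≥ 1, where ĉσ = cσ/a². -/

import Mathlib

open MeasureTheory ProbabilityTheory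

/-- CDF of the centred normal law with variance `σ²`. -/
noncomputable def normalCDF (σ s : ℝ) : ℝ :=
  ((gaussianReal 0 ((σ ^ 2).toNNReal)) (Set.Iic s)).toReal

section Aux
open Real Set

lemma integrableOn_comp_neg_Iic' {f : ℝ → ℝ} {c : ℝ} (hf : IntegrableOn f (Ioi (-c)) volume) :
    IntegrableOn (fun x => f (-x)) (Iic c) volume := by
  have A : MeasurableEmbedding (fun x : ℝ => -x) :=
    (Homeomorph.neg ℝ).isClosedEmbedding.measurableEmbedding
  have hset : ((fun x : ℝ => -x) ⁻¹' Iic c) = Ici (-c) := by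
    ext x
    simp only [mem_preimage, mem_Iic, mem_Ici]
    constructor <;> intro <;> linarith
  have h1 : (volume : Measure ℝ).restrict (Iic c) =
      Measure.map (fun x : ℝ => -x) (volume.restrict (Ici (-c))) := by
    conv_lhs => rw [← Measure.map_neg_eq_self (volume : Measure ℝ)]
    rw [Measure.restrict_map (by fun_prop) measurableSet_Iic, hset]
  rw [IntegrableOn, h1, A.integrable_map_iff]
  have : ((fun x => f (-x)) ∘ fun x : ℝ => -x) = f := by ext x; simp
  rw [this]
  exact (integrableOn_Ici_iff_integrableOn_Ioi).2 hf

lemma exp_neg_le' (u : ℝ) (hu : 0 < u) : rexp (-u) ≤ 4 / u ^ 2 := by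
  have h2 : u / 2 ≤ rexp (u / 2) := le_trans (by linarith) (Real.add_one_le_exp (u / 2))
  have h3 : u ^ 2 / 4 ≤ rexp u := by
    calc u ^ 2 / 4 = (u / 2) * (u / 2) := by ring
    _ ≤ rexp (u / 2) * rexp (u / 2) := mul_le_mul h2 h2 (by linarith) (exp_nonneg _)
    _ = rexp u := by rw [← Real.exp_add]; ring_nf
  have h4 : 0 < u ^ 2 / 4 := by positivity
  rw [Real.exp_neg]
  calc (rexp u)⁻¹ ≤ (u ^ 2 / 4)⁻¹ := inv_anti₀ h4 h3
  _ = 4 / u ^ 2 := by field_simp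


variable {σ : ℝ}

lemma var_ne_zero (hσ : 0 < σ) : ((σ ^ 2).toNNReal) ≠ 0 := by
  simp [Real.toNNReal_eq_zero, not_le, pow_pos hσ, hσ.ne']

lemma normalCDF_nonneg (σ s : ℝ) : 0 ≤ normalCDF σ s := ENNReal.toReal_nonneg

lemma normalCDF_le_one (σ s : ℝ) : normalCDF σ s ≤ 1 := by
  have := prob_le_one (μ := gaussianReal 0 ((σ ^ 2).toNNReal)) (s := Set.Iic s)
  unfold normalCDF
  exact ENNReal.toReal_le_of_le_ofReal one_pos.le (by simpa using this)

lemma normalCDF_eq_integral (hσ : 0 < σ) (s : ℝ) :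
    normalCDF σ s = ∫ x in Iic s, gaussianPDFReal 0 ((σ ^ 2).toNNReal) x := by
  rw [normalCDF, gaussianReal_apply_eq_integral _ (var_ne_zero hσ),
    ENNReal.toReal_ofReal]
  exact integral_nonneg fun x => gaussianPDFReal_nonneg _ _ _

lemma gaussianPDFReal_le (hσ : 0 < σ) (x : ℝ) :
    gaussianPDFReal 0 ((σ ^ 2).toNNReal) x ≤ 1 / σ := by
  rw [gaussianPDFReal]
  have h2 : ((((σ:ℝ) ^ 2).toNNReal : ℝ)) = σ ^ 2 := by
    rw [Real.coe_toNNReal _ (sq_nonneg σ)]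
  have hs : σ ≤ Real.sqrt (2 * π * ((σ ^ 2).toNNReal : ℝ)) := by
    rw [h2]
    have h1 : σ ^ 2 ≤ 2 * π * σ ^ 2 := by
      nlinarith [Real.pi_gt_three, sq_nonneg σ]
    calc σ = Real.sqrt (σ ^ 2) := by rw [Real.sqrt_sq hσ.le]
    _ ≤ _ := Real.sqrt_le_sqrt h1
  have hx : rexp (-(x - 0) ^ 2 / (2 * ((σ ^ 2).toNNReal : ℝ))) ≤ 1 := by
    apply Real.exp_le_one_iff.2
    apply div_nonpos_of_nonpos_of_nonneg
    · simp [sq_nonneg]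
    · positivity
  calc (Real.sqrt (2 * π * ((σ ^ 2).toNNReal:ℝ)))⁻¹ * rexp (-(x - 0) ^ 2 / (2 * ((σ ^ 2).toNNReal:ℝ)))
      ≤ (Real.sqrt (2 * π * ((σ ^ 2).toNNReal:ℝ)))⁻¹ * 1 := by
        apply mul_le_mul_of_nonneg_left hx (by positivity)
    _ = (Real.sqrt (2 * π * ((σ ^ 2).toNNReal:ℝ)))⁻¹ := mul_one _
    _ ≤ 1 / σ := by
        rw [one_div]
        exact inv_anti₀ hσ hs

lemma normalCDF_lipschitz (hσ : 0 < σ) {x y : ℝ} (hxy : x ≤ y) :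
    normalCDF σ y - normalCDF σ x ≤ (y - x) / σ := by
  rw [normalCDF_eq_integral hσ, normalCDF_eq_integral hσ]
  have hdisj : Disjoint (Iic x) (Ioc x y) := by
    simp [Set.disjoint_left]
    intro a ha h2 ; linarith
  have hunion : Iic x ∪ Ioc x y = Iic y := Set.Iic_union_Ioc_eq_Iic hxy
  have hint := integrable_gaussianPDFReal 0 ((σ ^ 2).toNNReal)
  rw [← hunion, setIntegral_union hdisj measurableSet_Ioc hint.integrableOn hint.integrableOn]
  have : ∫ t in Ioc x y, gaussianPDFReal 0 ((σ ^ 2).toNNReal) t ≤ ∫ _ in Ioc x y, 1/σ := by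
    apply setIntegral_mono_on hint.integrableOn (integrableOn_const measure_Ioc_lt_top.ne)
      measurableSet_Ioc
    exact fun t _ => gaussianPDFReal_le hσ t
  rw [setIntegral_const] at this
  simp only [Real.volume_real_Ioc_of_le hxy, smul_eq_mul] at this
  rw [mul_one_div] at this
  linarith [this]

lemma normalCDF_mono (hσ : 0 < σ) {x y : ℝ} (hxy : x ≤ y) :
    normalCDF σ x ≤ normalCDF σ y := by
  unfold normalCDF
  exact ENNReal.toReal_mono (measure_ne_top _ _) (measure_mono (Set.Iic_subset_Iic.2 hxy))

lemma normalCDF_neg (hσ : 0 < σ) (x : ℝ) :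
    normalCDF σ (-x) = 1 - normalCDF σ x := by
  set v := ((σ:ℝ) ^ 2).toNNReal with hv
  have hv0 : v ≠ 0 := var_ne_zero hσ
  have hmap : (gaussianReal 0 v).map (fun y => (-1 : ℝ) * y) = gaussianReal 0 v := by
    have := gaussianReal_map_const_mul (μ := 0) (v := v) (-1)
    simpa using this
  have h1 : gaussianReal 0 v (Iic (-x)) = gaussianReal 0 v (Ici x) := by
    conv_lhs => rw [← hmap]
    rw [Measure.map_apply (by fun_prop) measurableSet_Iic]
    congr 1
    ext y
    simp
  have h2 : gaussianReal 0 v (Ici x) = gaussianReal 0 v (Ioi x) := by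
    rw [← Set.Ioi_union_left, measure_union (by simp) (measurableSet_singleton x)]
    have : gaussianReal 0 v {x} = 0 :=
      gaussianReal_absolutelyContinuous 0 hv0 (measure_singleton x)
    simp [this]
  have h3 : gaussianReal 0 v (Iic x) + gaussianReal 0 v (Ioi x) = 1 := by
    rw [← measure_union (by simp) measurableSet_Ioi]
    simp [Set.Iic_union_Ioi]
  have h4 : (gaussianReal 0 v (Iic x)).toReal + (gaussianReal 0 v (Ioi x)).toReal = 1 := by
    rw [← ENNReal.toReal_add (measure_ne_top _ _) (measure_ne_top _ _), h3]
    simp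
  unfold normalCDF
  rw [← hv, h1, h2]
  linarith

lemma normalCDF_scale (hσ : 0 < σ) {k : ℝ} (hk : 0 < k) (x : ℝ) :
    normalCDF (k * σ) (k * x) = normalCDF σ x := by
  set v := ((σ:ℝ) ^ 2).toNNReal with hv
  have hveq : (((k * σ) ^ 2).toNNReal) = (show NNReal from ⟨k^2, sq_nonneg k⟩) * v := by
    rw [← NNReal.coe_inj]
    push_cast
    rw [Real.coe_toNNReal _ (by positivity), hv]
    show (k * σ) ^ 2 = k ^ 2 * ((σ ^ 2).toNNReal : ℝ)
    rw [Real.coe_toNNReal _ (sq_nonneg σ)]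
    ring
  have hmap : (gaussianReal 0 v).map (fun y => k * y) = gaussianReal 0 (((k * σ) ^ 2).toNNReal) := by
    have := gaussianReal_map_const_mul (μ := 0) (v := v) k
    rw [hveq]
    simp only [mul_zero] at this
    exact this
  unfold normalCDF
  rw [← hv, ← hmap, Measure.map_apply (by fun_prop) measurableSet_Iic]
  congr 2
  ext y
  simp only [Set.mem_preimage, Set.mem_Iic]
  exact mul_le_mul_iff_right₀ hk

lemma normalCDF_tail {σ : ℝ} (hσ : 0 < σ) {M : ℝ} (hM : 0 < M) :
    normalCDF σ (-M) ≤ 6 * σ ^ 3 / M ^ 3 := by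
  have hvc : ((((σ : ℝ) ^ 2).toNNReal : ℝ)) = σ ^ 2 := Real.coe_toNNReal _ (sq_nonneg σ)
  have hcdf : normalCDF σ (-M) = ∫ x in Iic (-M), ProbabilityTheory.gaussianPDFReal 0 ((σ ^ 2).toNNReal) x := by
    rw [normalCDF, ProbabilityTheory.gaussianReal_apply_eq_integral _
      (by simp [Real.toNNReal_eq_zero, not_le, pow_pos hσ, hσ.ne']), ENNReal.toReal_ofReal]
    exact integral_nonneg fun x => ProbabilityTheory.gaussianPDFReal_nonneg _ _ _
  set g : ℝ → ℝ := fun x => 16 * σ ^ 3 * (-x) ^ (-4 : ℝ) with hg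
  have hsqrt : σ ≤ Real.sqrt (2 * π * (((σ ^ 2).toNNReal : ℝ))) := by
    rw [hvc]
    have h1 : σ ^ 2 ≤ 2 * π * σ ^ 2 := by nlinarith [Real.pi_gt_three, sq_nonneg σ]
    calc σ = Real.sqrt (σ ^ 2) := by rw [Real.sqrt_sq hσ.le]
    _ ≤ _ := Real.sqrt_le_sqrt h1
  have hle : ∀ x ∈ Iic (-M), ProbabilityTheory.gaussianPDFReal 0 ((σ ^ 2).toNNReal) x ≤ g x := by
    intro x hx
    simp only [mem_Iic] at hx
    have hxneg : x < 0 := lt_of_le_of_lt hx (by linarith)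
    have hx0 : x ≠ 0 := ne_of_lt hxneg
    have hx2 : 0 < x ^ 2 := by positivity
    have hu : 0 < x ^ 2 / (2 * σ ^ 2) := div_pos hx2 (by positivity)
    rw [ProbabilityTheory.gaussianPDFReal, hvc]
    have hexp : rexp (-(x - 0) ^ 2 / (2 * σ ^ 2)) ≤ 4 / (x ^ 2 / (2 * σ ^ 2)) ^ 2 := by
      have heq : -(x - 0) ^ 2 / (2 * σ ^ 2) = -(x ^ 2 / (2 * σ ^ 2)) := by ring
      rw [heq]
      exact exp_neg_le' _ hu
    have hrpow : (-x) ^ (-4 : ℝ) = (x ^ 4)⁻¹ := by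
      rw [show (-4 : ℝ) = -(4 : ℕ) by norm_num, Real.rpow_neg (by linarith), Real.rpow_natCast,
        show (-x) ^ (4 : ℕ) = x ^ 4 from by ring]
    have hsqrt2 : σ ≤ Real.sqrt (2 * π * σ ^ 2) := by rw [hvc] at hsqrt; exact hsqrt
    have h2 : (Real.sqrt (2 * π * σ ^ 2))⁻¹ ≤ σ⁻¹ := inv_anti₀ hσ hsqrt2
    calc (Real.sqrt (2 * π * σ ^ 2))⁻¹ * rexp (-(x - 0) ^ 2 / (2 * σ ^ 2))
        ≤ σ⁻¹ * (4 / (x ^ 2 / (2 * σ ^ 2)) ^ 2) := by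
          apply mul_le_mul h2 hexp (exp_nonneg _) (by positivity)
      _ = 16 * σ ^ 3 * (x ^ 4)⁻¹ := by field_simp; ring
      _ = g x := by rw [hg]; simp only; rw [hrpow]
  have hint : IntegrableOn g (Iic (-M)) volume := by
    have h1 : IntegrableOn (fun x : ℝ => x ^ (-4 : ℝ)) (Ioi M) volume :=
      integrableOn_Ioi_rpow_of_lt (by norm_num) hM
    have h2 : IntegrableOn (fun x : ℝ => (-x) ^ (-4 : ℝ)) (Iic (-M)) volume :=
      integrableOn_comp_neg_Iic' (f := fun x : ℝ => x ^ (-4 : ℝ)) (c := -M) (by rw [neg_neg]; exact h1)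
    exact h2.const_mul (16 * σ ^ 3)
  have hpdfint := (ProbabilityTheory.integrable_gaussianPDFReal 0 ((σ ^ 2).toNNReal)).integrableOn
    (s := Iic (-M))
  have hmono : normalCDF σ (-M) ≤ ∫ x in Iic (-M), g x := by
    rw [hcdf]
    exact setIntegral_mono_on hpdfint hint measurableSet_Iic hle
  have hcalc : ∫ x in Iic (-M), g x = 16 * σ ^ 3 * (M ^ (-3 : ℝ) / 3) := by
    rw [hg]
    rw [integral_const_mul]
    have : ∫ x in Iic (-M), (-x) ^ (-4 : ℝ) = ∫ x in Ioi M, x ^ (-4 : ℝ) := by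
      rw [← integral_comp_neg_Ioi]
      congr 1
      ext x
      rw [neg_neg]
    rw [this, integral_Ioi_rpow_of_lt (by norm_num) hM]
    norm_num
  have hM3 : M ^ (-3 : ℝ) = (M ^ 3)⁻¹ := by
    rw [show (-3 : ℝ) = -(3 : ℕ) by norm_num, Real.rpow_neg hM.le, Real.rpow_natCast]
  calc normalCDF σ (-M) ≤ 16 * σ ^ 3 * (M ^ (-3 : ℝ) / 3) := hmono.trans_eq hcalc
    _ = (16 / 3) * (σ ^ 3 / M ^ 3) := by rw [hM3]; field_simp
    _ ≤ 6 * (σ ^ 3 / M ^ 3) := by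
        have hpos : 0 < σ ^ 3 / M ^ 3 := by positivity
        nlinarith
    _ = 6 * σ ^ 3 / M ^ 3 := by ring

end Aux

set_option maxHeartbeats 2000000 in
/-- Quantitative Slutsky / delta-method for `x ↦ 1/x`. -/
theorem slutsky_inverse_rate
    {Ω : Type*} [MeasurableSpace Ω] (P : Measure Ω) [IsProbabilityMeasure P]
    (η : ℝ → Ω → ℝ) (hmeas : ∀ t, Measurable (η t))
    (a : ℝ) (ha : a ≠ 0) (σ : ℝ) (hσ : 0 < σ)
    (b : ℝ) (hb : b ∈ Set.Ioc (0 : ℝ) (1 / 4)) (C : ℝ) (hC : 0 < C)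
    (h : ∀ t ≥ (1 : ℝ), ∀ s : ℝ,
      |(P {ω | Real.sqrt t * (η t ω - a) ≤ s}).toReal - normalCDF σ s| ≤ C * t ^ (-b)) :
    ∀ c > (0 : ℝ), ∃ L > (0 : ℝ), ∀ t ≥ (1 : ℝ), ∀ s : ℝ,
      |(P {ω | c * Real.sqrt t * ((η t ω)⁻¹ - a⁻¹) ≤ s}).toReal
        - normalCDF (c * σ / a ^ 2) s| ≤ L * t ^ (-b) := by
  obtain ⟨hb0, hb4⟩ := hb
  intro c hc
  have ha2 : (0:ℝ) < a ^ 2 := by positivity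
  have habs : 0 < |a| := abs_pos.2 ha
  set σh : ℝ := c * σ / a ^ 2 with hσh
  have hσh0 : 0 < σh := by rw [hσh]; positivity
  set T : ℝ := max 1 ((2 / |a|) ^ (4:ℕ)) with hTdef
  have hT1 : (1:ℝ) ≤ T := le_max_left _ _
  set K : ℝ := 2 * (6 * σ ^ 3 + C) + C + 2 * c / (|a| ^ 3 * σh) with hKdef
  have hK0 : 0 ≤ K := by rw [hKdef]; positivity
  set L : ℝ := K + T ^ b + 1 with hLdef
  have hTb : 0 < T ^ b := Real.rpow_pos_of_pos (lt_of_lt_of_le one_pos hT1) _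
  refine ⟨L, by rw [hLdef]; linarith, ?_⟩
  intro t ht s
  have htpos : 0 < t := lt_of_lt_of_le one_pos ht
  have htb : 0 < t ^ (-b) := Real.rpow_pos_of_pos htpos _
  -- probability helpers
  have hfin : ∀ S : Set Ω, P S ≠ ⊤ := fun S => measure_ne_top P S
  have hone : ∀ S : Set Ω, (P S).toReal ≤ 1 := fun S => by
    simpa using ENNReal.toReal_mono ENNReal.one_ne_top (prob_le_one (μ := P) (s := S))
  have hmono : ∀ {S S' : Set Ω}, S ⊆ S' → (P S).toReal ≤ (P S').toReal :=
    fun hss => ENNReal.toReal_mono (hfin _) (measure_mono hss)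
  have hunion : ∀ S S' : Set Ω, (P (S ∪ S')).toReal ≤ (P S).toReal + (P S').toReal := by
    intro S S'
    rw [← ENNReal.toReal_add (hfin S) (hfin S')]
    exact ENNReal.toReal_mono (ENNReal.add_ne_top.2 ⟨hfin S, hfin S'⟩) (measure_union_le _ _)
  have hcompl : ∀ {S : Set Ω}, MeasurableSet S → (P Sᶜ).toReal = 1 - (P S).toReal := by
    intro S hS
    rw [prob_compl_eq_one_sub hS,
      ENNReal.toReal_sub_of_le (prob_le_one) ENNReal.one_ne_top]
    simp
  by_cases hcase : T ≤ t
  · -- main case : t large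
    -- basic exponent facts
    have hsqrt_pos : 0 < Real.sqrt t := Real.sqrt_pos.2 htpos
    have hst : Real.sqrt t = t ^ ((1:ℝ)/2) := Real.sqrt_eq_rpow t
    set M : ℝ := t ^ ((1:ℝ)/4 - b/2) with hMdef
    have hM0 : 0 < M := Real.rpow_pos_of_pos htpos _
    have f1 : M ^ 2 / Real.sqrt t = t ^ (-b) := by
      rw [hMdef, hst, ← Real.rpow_natCast (t ^ ((1:ℝ)/4 - b/2)) 2, ← Real.rpow_mul htpos.le,
        ← Real.rpow_sub htpos]
      congr 1
      ring
    have f2 : M / Real.sqrt t ≤ |a| / 2 := by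
      have e1 : M / Real.sqrt t = t ^ (-(1:ℝ)/4 - b/2) := by
        rw [hMdef, hst, ← Real.rpow_sub htpos]; ring_nf
      have e2 : t ^ (-(1:ℝ)/4 - b/2) ≤ t ^ (-(1:ℝ)/4) :=
        Real.rpow_le_rpow_of_exponent_le ht (by linarith)
      have e3 : t ^ (-(1:ℝ)/4) ≤ |a| / 2 := by
        have h24 : ((2 / |a|) ^ (4:ℕ) : ℝ) ≤ t := le_trans (le_max_right _ _) hcase
        have h24' : (2 / |a|) ^ (4:ℕ) = ((2 / |a|) : ℝ) ^ ((4:ℕ):ℝ) := by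
          rw [Real.rpow_natCast]
        have hbase : (0:ℝ) < 2 / |a| := by positivity
        have h5 : (2 / |a|) ≤ t ^ ((1:ℝ)/4) := by
          have := Real.rpow_le_rpow (by positivity) h24 (by norm_num : (0:ℝ) ≤ 1/4)
          rwa [h24', ← Real.rpow_mul hbase.le, show ((4:ℕ):ℝ) * (1/4) = 1 by norm_num,
            Real.rpow_one] at this
        have h6 : t ^ (-(1:ℝ)/4) = (t ^ ((1:ℝ)/4))⁻¹ := by
          rw [← Real.rpow_neg htpos.le]; norm_num
        rw [h6]
        have h7 : (t ^ ((1:ℝ)/4))⁻¹ ≤ (2 / |a|)⁻¹ := inv_anti₀ hbase h5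
        calc (t ^ ((1:ℝ)/4))⁻¹ ≤ (2 / |a|)⁻¹ := h7
          _ = |a| / 2 := by rw [inv_div]
      linarith [e1 ▸ le_trans e2 e3]
    have f3 : normalCDF σ (-M) ≤ 6 * σ ^ 3 * t ^ (-b) := by
      have h1 := normalCDF_tail hσ hM0
      have hM3 : t ^ b ≤ M ^ 3 := by
        rw [hMdef, ← Real.rpow_natCast (t ^ ((1:ℝ)/4 - b/2)) 3, ← Real.rpow_mul htpos.le]
        apply Real.rpow_le_rpow_of_exponent_le ht
        push_cast; linarith
      have h2 : (M ^ 3)⁻¹ ≤ t ^ (-b) := by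
        rw [Real.rpow_neg htpos.le]
        exact inv_anti₀ (Real.rpow_pos_of_pos htpos _) hM3
      calc normalCDF σ (-M) ≤ 6 * σ ^ 3 / M ^ 3 := h1
        _ = 6 * σ ^ 3 * (M ^ 3)⁻¹ := by ring
        _ ≤ 6 * σ ^ 3 * t ^ (-b) := by
            apply mul_le_mul_of_nonneg_left h2 (by positivity)
    set ε : ℝ := 2 * c / |a| ^ 3 * t ^ (-b) with hεdef
    have hε0 : 0 < ε := by rw [hεdef]; positivity
    set X : Ω → ℝ := fun ω => Real.sqrt t * (η t ω - a) with hXdef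
    have hmX : Measurable X := ((hmeas t).sub measurable_const).const_mul _
    have hX : ∀ u : ℝ, |(P {ω | X ω ≤ u}).toReal - normalCDF σ u| ≤ C * t ^ (-b) :=
      fun u => h t ht u
    -- upper and lower bounds for P(X ≥ u)
    have hgeub : ∀ u : ℝ, (P {ω | u ≤ X ω}).toReal ≤ normalCDF σ (-u) + C * t ^ (-b) := by
      intro u
      apply le_of_forall_pos_le_add
      intro δ hδ
      have hsub : {ω | u ≤ X ω} ⊆ {ω | X ω ≤ u - σ * δ}ᶜ := by
        intro ω hω
        simp only [Set.mem_compl_iff, Set.mem_setOf_eq] at *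
        nlinarith
      have h1 : (P {ω | u ≤ X ω}).toReal ≤ 1 - (P {ω | X ω ≤ u - σ * δ}).toReal := by
        rw [← hcompl (S := {ω | X ω ≤ u - σ * δ}) (hmX measurableSet_Iic)]
        exact hmono hsub
      have h2 := abs_le.1 (hX (u - σ * δ))
      have h3 : 1 - normalCDF σ (u - σ * δ) = normalCDF σ (-(u - σ * δ)) :=
        (normalCDF_neg hσ _).symm
      have h4 : normalCDF σ (-(u - σ * δ)) - normalCDF σ (-u) ≤ δ := by
        have := normalCDF_lipschitz hσ (x := -u) (y := -(u - σ * δ)) (by nlinarith)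
        have heq : (-(u - σ * δ) - -u) / σ = δ := by field_simp; ring
        linarith [heq ▸ this]
      linarith [h1, h2.1, h3 ▸ (by linarith [h2.1] : (1:ℝ) - (P {ω | X ω ≤ u - σ * δ}).toReal ≤ 1 - normalCDF σ (u - σ * δ) + C * t ^ (-b))]
    have hgelb : ∀ u : ℝ, normalCDF σ (-u) - C * t ^ (-b) ≤ (P {ω | u ≤ X ω}).toReal := by
      intro u
      have hsub : {ω | X ω ≤ u}ᶜ ⊆ {ω | u ≤ X ω} := by
        intro ω hω
        simp only [Set.mem_compl_iff, Set.mem_setOf_eq] at *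
        linarith [lt_of_not_ge hω]
      have h1 : 1 - (P {ω | X ω ≤ u}).toReal ≤ (P {ω | u ≤ X ω}).toReal := by
        rw [← hcompl (S := {ω | X ω ≤ u}) (hmX measurableSet_Iic)]
        exact hmono hsub
      have h2 := abs_le.1 (hX u)
      have h3 := normalCDF_neg hσ u
      linarith
    -- bound on the bad event
    set G : Set Ω := {ω | |X ω| ≤ M} with hGdef
    have hGc : (P Gᶜ).toReal ≤ 2 * (6 * σ ^ 3 + C) * t ^ (-b) := by
      have hsub : Gᶜ ⊆ {ω | X ω ≤ -M} ∪ {ω | M ≤ X ω} := by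
        intro ω hω
        simp only [hGdef, Set.mem_compl_iff, Set.mem_setOf_eq, Set.mem_union, not_le] at *
        rcases lt_abs.1 hω with h1 | h1
        · right; linarith
        · left; linarith
      have h1 : (P {ω | X ω ≤ -M}).toReal ≤ normalCDF σ (-M) + C * t ^ (-b) := by
        have := abs_le.1 (hX (-M))
        linarith [this.2]
      have h2 : (P {ω | M ≤ X ω}).toReal ≤ normalCDF σ (-M) + C * t ^ (-b) := hgeub M
      calc (P Gᶜ).toReal ≤ (P ({ω | X ω ≤ -M} ∪ {ω | M ≤ X ω})).toReal := hmono hsub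
        _ ≤ (P {ω | X ω ≤ -M}).toReal + (P {ω | M ≤ X ω}).toReal := hunion _ _
        _ ≤ 2 * (6 * σ ^ 3 + C) * t ^ (-b) := by linarith [f3]
    -- pointwise approximation on the good event
    have happrox : ∀ ω ∈ G, |c * Real.sqrt t * ((η t ω)⁻¹ - a⁻¹) + c * X ω / a ^ 2| ≤ ε := by
      intro ω hω
      simp only [hGdef, Set.mem_setOf_eq] at hω
      set y := η t ω with hy
      have hXy : X ω = Real.sqrt t * (y - a) := by simp only [hXdef, hy]
      have hya : |y - a| ≤ M / Real.sqrt t := by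
        rw [le_div_iff₀ hsqrt_pos]
        have : |X ω| = |y - a| * Real.sqrt t := by
          rw [hXy, abs_mul, abs_of_pos hsqrt_pos]; ring
        linarith [this ▸ hω]
      have hya2 : |y - a| ≤ |a| / 2 := hya.trans f2
      have hylb : |a| / 2 ≤ |y| := by
        have h1 : |a| - |y| ≤ |a - y| := abs_sub_abs_le_abs_sub a y
        rw [abs_sub_comm] at h1
        linarith
      have hy0 : y ≠ 0 := by
        intro h0
        rw [h0, abs_zero] at hylb
        linarith
      have hiden : c * Real.sqrt t * (y⁻¹ - a⁻¹) + c * X ω / a ^ 2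
          = c * Real.sqrt t * (y - a) ^ 2 / (a ^ 2 * y) := by
        rw [hXy]
        field_simp
        ring
      rw [hiden, abs_div]
      have hnumnn : (0:ℝ) ≤ c * Real.sqrt t * (M / Real.sqrt t) ^ 2 := by positivity
      have hnum : |c * Real.sqrt t * (y - a) ^ 2| ≤ c * Real.sqrt t * (M / Real.sqrt t) ^ 2 := by
        have h0 : (y - a) ^ 2 ≤ (M / Real.sqrt t) ^ 2 := by
          rw [← sq_abs (y - a)]
          exact pow_le_pow_left₀ (abs_nonneg _) hya 2
        rw [abs_mul, abs_mul, abs_of_pos hc, abs_of_pos hsqrt_pos,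
          abs_of_nonneg (sq_nonneg (y - a))]
        exact mul_le_mul_of_nonneg_left h0 (by positivity)
      have hdenpos : (0:ℝ) < |a| ^ 3 / 2 := by positivity
      have hden : |a| ^ 3 / 2 ≤ |a ^ 2 * y| := by
        rw [abs_mul, abs_pow, sq_abs]
        calc |a| ^ 3 / 2 = a ^ 2 * (|a| / 2) := by
              rw [← sq_abs]; ring
          _ ≤ a ^ 2 * |y| := mul_le_mul_of_nonneg_left hylb (sq_nonneg a)
      calc |c * Real.sqrt t * (y - a) ^ 2| / |a ^ 2 * y|
          ≤ (c * Real.sqrt t * (M / Real.sqrt t) ^ 2) / (|a| ^ 3 / 2) :=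
            div_le_div₀ hnumnn hnum hdenpos hden
        _ = 2 * c / |a| ^ 3 * (M ^ 2 / Real.sqrt t) := by
            have hss : Real.sqrt t * Real.sqrt t = t := Real.mul_self_sqrt htpos.le
            field_simp
        _ = ε := by rw [f1]
    -- event inclusions
    set A : Set Ω := {ω | c * Real.sqrt t * ((η t ω)⁻¹ - a⁻¹) ≤ s} with hAdef
    set u₁ : ℝ := -((s + ε) * a ^ 2) / c with hu₁def
    set u₂ : ℝ := -((s - ε) * a ^ 2) / c with hu₂def
    have hA_up : A ⊆ {ω | u₁ ≤ X ω} ∪ Gᶜ := by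
      intro ω hω
      by_cases hG : ω ∈ G
      · left
        simp only [hAdef, Set.mem_setOf_eq] at hω ⊢
        have happ := (abs_le.1 (happrox ω hG)).1
        have e1 : -(c * X ω) / a ^ 2 ≤ s + ε := by
          rw [neg_div]
          linarith
        have e2 : -(c * X ω) ≤ (s + ε) * a ^ 2 := by
          rw [div_le_iff₀ ha2] at e1
          linarith
        rw [hu₁def, div_le_iff₀ hc]
        linarith
      · right; exact hG
    have hA_lo : {ω | u₂ ≤ X ω} ⊆ A ∪ Gᶜ := by
      intro ω hω
      by_cases hG : ω ∈ G
      · left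
        simp only [Set.mem_setOf_eq] at hω
        simp only [hAdef, Set.mem_setOf_eq]
        have happ := (abs_le.1 (happrox ω hG)).2
        rw [hu₂def, div_le_iff₀ hc] at hω
        have e1 : -(c * X ω) ≤ (s - ε) * a ^ 2 := by linarith
        have e2 : -(c * X ω) / a ^ 2 ≤ s - ε := by
          rw [div_le_iff₀ ha2]
          linarith
        rw [neg_div] at e2
        linarith
      · right; exact hG
    -- probability bounds
    have hup : (P A).toReal ≤ normalCDF σ (-u₁) + C * t ^ (-b) + (P Gᶜ).toReal := by
      calc (P A).toReal ≤ (P ({ω | u₁ ≤ X ω} ∪ Gᶜ)).toReal := hmono hA_up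
        _ ≤ (P {ω | u₁ ≤ X ω}).toReal + (P Gᶜ).toReal := hunion _ _
        _ ≤ _ := by linarith [hgeub u₁]
    have hlo : normalCDF σ (-u₂) - C * t ^ (-b) - (P Gᶜ).toReal ≤ (P A).toReal := by
      have h1 : (P {ω | u₂ ≤ X ω}).toReal ≤ (P A).toReal + (P Gᶜ).toReal :=
        (hmono hA_lo).trans (hunion _ _)
      linarith [hgelb u₂]
    -- scaling
    have hscale : ∀ r : ℝ, normalCDF σ (r * a ^ 2 / c) = normalCDF σh r := by
      intro r
      have h1 := normalCDF_scale hσ (k := c / a ^ 2) (by positivity) (r * a ^ 2 / c)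
      have e1 : c / a ^ 2 * (r * a ^ 2 / c) = r := by field_simp
      have e2 : c / a ^ 2 * σ = σh := by rw [hσh]; ring
      rw [e1, e2] at h1
      exact h1.symm
    have hs1 : normalCDF σ (-u₁) = normalCDF σh (s + ε) := by
      rw [show -u₁ = (s + ε) * a ^ 2 / c by rw [hu₁def]; ring, hscale]
    have hs2 : normalCDF σ (-u₂) = normalCDF σh (s - ε) := by
      rw [show -u₂ = (s - ε) * a ^ 2 / c by rw [hu₂def]; ring, hscale]
    -- Lipschitz
    have hlip1 : normalCDF σh (s + ε) ≤ normalCDF σh s + ε / σh := by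
      have h1 := normalCDF_lipschitz hσh0 (x := s) (y := s + ε) (by linarith)
      have e : (s + ε - s) / σh = ε / σh := by ring_nf
      linarith [e ▸ h1]
    have hlip2 : normalCDF σh s - ε / σh ≤ normalCDF σh (s - ε) := by
      have h1 := normalCDF_lipschitz hσh0 (x := s - ε) (y := s) (by linarith)
      have e : (s - (s - ε)) / σh = ε / σh := by ring_nf
      linarith [e ▸ h1]
    have hεσ : ε / σh = 2 * c / (|a| ^ 3 * σh) * t ^ (-b) := by
      rw [hεdef]
      field_simp
    have hKL : K * t ^ (-b) ≤ L * t ^ (-b) :=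
      mul_le_mul_of_nonneg_right (by rw [hLdef]; linarith) htb.le
    have hKexp : K * t ^ (-b)
        = 2 * (6 * σ ^ 3 + C) * t ^ (-b) + C * t ^ (-b) + 2 * c / (|a| ^ 3 * σh) * t ^ (-b) := by
      rw [hKdef]; ring
    rw [hs1] at hup
    rw [hs2] at hlo
    rw [abs_sub_le_iff]
    have e1 : ε / σh + C * t ^ (-b) + 2 * (6 * σ ^ 3 + C) * t ^ (-b) = K * t ^ (-b) := by
      rw [hεσ, hKexp]; ring
    constructor
    · have s1 : (P A).toReal - normalCDF σh s ≤ ε / σh + C * t ^ (-b) + (P Gᶜ).toReal := by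
        linarith [hup, hlip1]
      have s2 : ε / σh + C * t ^ (-b) + (P Gᶜ).toReal ≤ K * t ^ (-b) := by
        linarith [hGc, e1]
      exact le_trans (le_trans s1 s2) hKL
    · have s1 : normalCDF σh s - (P A).toReal ≤ ε / σh + C * t ^ (-b) + (P Gᶜ).toReal := by
        linarith [hlo, hlip2]
      have s2 : ε / σh + C * t ^ (-b) + (P Gᶜ).toReal ≤ K * t ^ (-b) := by
        linarith [hGc, e1]
      exact le_trans (le_trans s1 s2) hKL

  · -- small case : t < T
    push_neg at hcase
    have h1 : |(P {ω | c * Real.sqrt t * ((η t ω)⁻¹ - a⁻¹) ≤ s}).toReal - normalCDF σh s| ≤ 1 := by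
      rw [abs_sub_le_iff]
      constructor
      · linarith [hone {ω | c * Real.sqrt t * ((η t ω)⁻¹ - a⁻¹) ≤ s}, normalCDF_nonneg σh s]
      · linarith [ENNReal.toReal_nonneg (a := P {ω | c * Real.sqrt t * ((η t ω)⁻¹ - a⁻¹) ≤ s}),
          normalCDF_le_one σh s]
    have h2 : (1:ℝ) ≤ T ^ b * t ^ (-b) := by
      have e1 : t ^ b ≤ T ^ b := Real.rpow_le_rpow htpos.le hcase.le hb0.le
      have e2 : t ^ b * t ^ (-b) = 1 := by
        rw [← Real.rpow_add htpos]; simp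
      nlinarith [Real.rpow_pos_of_pos htpos b]
    calc |(P {ω | c * Real.sqrt t * ((η t ω)⁻¹ - a⁻¹) ≤ s}).toReal - normalCDF σh s| ≤ 1 := h1
      _ ≤ T ^ b * t ^ (-b) := h2
      _ ≤ L * t ^ (-b) := by
          apply mul_le_mul_of_nonneg_right _ htb.le
          rw [hLdef]; linarith
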